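/- Let d ≥ 2. There exist unit-direction instance vectors and signs such that for any sequence of weight vectors (w_t)_{t=1}^T chosen online, an adversary choosing g_t ∈ {−1/√2, 1/√2} (for t ≤ d) or g_t ∈ {−1,1} (for t > d) with sign matching sign(x_tᵀ w_t), and x_t with x_tᵀ S_{t−1}† x_t = 1 and h_{t−1}ᵀ S_{t−1}† x_t = 0 (for t > d), guarantees h_Tᵀ S_T† h_T = T/2, where h_t = −Σ_{q≤t} g_q x_q and S_t = Σ_{q≤t} x_q x_qᵀ. Consequently, for the comparator u = β√(2/T) S_T† h_T one has ‖u‖_{S_T} = β and Σ_t g_t x_tᵀ(w_t − u) ≥ ‖u‖_{S_T}·√(T/2). -/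

import Mathlib

set_option linter.unusedSectionVars false
set_option maxHeartbeats 1000000
open Matrix

section helpers
variable {m n p : Type*} [Fintype m] [Fintype n] [Fintype p] [DecidableEq m] [DecidableEq n]

lemma myA (A : Matrix m n ℝ) (x : n → ℝ) (y : p → ℝ) :
    A * vecMulVec x y = vecMulVec (A *ᵥ x) y := by
  ext i j
  simp [Matrix.mul_apply, vecMulVec_apply, mulVec, dotProduct, Finset.sum_mul, mul_assoc]

lemma myB (A : Matrix n p ℝ) (x : m → ℝ) (y : n → ℝ) :
    vecMulVec x y * A = vecMulVec x (Aᵀ *ᵥ y) := by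
  ext i j
  simp only [Matrix.mul_apply, vecMulVec_apply, mulVec, dotProduct, Finset.mul_sum, transpose_apply]
  exact Finset.sum_congr rfl (fun k _ => by ring)

lemma myC (x : m → ℝ) (y z : n → ℝ) : (vecMulVec x y) *ᵥ z = (y ⬝ᵥ z) • x := by
  ext i
  simp only [vecMulVec_apply, mulVec, dotProduct, Pi.smul_apply, smul_eq_mul, Finset.mul_sum]
  rw [Finset.sum_mul]
  exact Finset.sum_congr rfl (fun k _ => by ring)

lemma myD (x : m → ℝ) (y u : n → ℝ) (v : p → ℝ) :
    vecMulVec x y * vecMulVec u v = (y ⬝ᵥ u) • vecMulVec x v := by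
  rw [myA, myC]
  ext i j
  simp [vecMulVec_apply, smul_eq_mul]
  ring

lemma myE (x : m → ℝ) (y : n → ℝ) : (vecMulVec x y)ᵀ = vecMulVec y x := by
  ext i j; simp [vecMulVec_apply, transpose_apply, mul_comm]

lemma myF (A : Matrix m n ℝ) (v : m → ℝ) : Matrix.vecMul v A = Aᵀ *ᵥ v := by
  ext j; simp [vecMul, mulVec, dotProduct, transpose_apply, mul_comm]

lemma myG (A : Matrix m n ℝ) (v : m → ℝ) (w : n → ℝ) : (v ⬝ᵥ A *ᵥ w) = (Aᵀ *ᵥ v) ⬝ᵥ w := by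
  rw [Matrix.dotProduct_mulVec, myF]

lemma myH (A : Matrix m n ℝ) (v : n → ℝ) (w : m → ℝ) : ((A *ᵥ v) ⬝ᵥ w) = v ⬝ᵥ (Aᵀ *ᵥ w) := by
  rw [dotProduct_comm, myG, dotProduct_comm]
end helpers

noncomputable section Planar

def sgn (r : ℝ) : ℝ := if 0 ≤ r then 1 else -1

lemma sgn_cases (r : ℝ) : sgn r = 1 ∨ sgn r = -1 := by unfold sgn; split <;> simp

lemma sgn_mul_nonneg (r : ℝ) : 0 ≤ sgn r * r := by
  unfold sgn; split
  · simpa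
  · push_neg at *; nlinarith

structure PSt where
  M : Matrix (Fin 2) (Fin 2) ℝ
  N : Matrix (Fin 2) (Fin 2) ℝ
  h : Fin 2 → ℝ

def pw (s : PSt) : Fin 2 → ℝ := ![-(s.h 1), s.h 0]

def pX (s : PSt) : Fin 2 → ℝ :=
  (Real.sqrt (pw s ⬝ᵥ (1 + s.M) *ᵥ pw s))⁻¹ • ((1 + s.M) *ᵥ pw s)

def pstep (σ : ℝ) (s : PSt) : PSt :=
  ⟨s.M + vecMulVec (pX s) (pX s),
   s.N - (2⁻¹ : ℝ) • vecMulVec (s.N *ᵥ pX s) (s.N *ᵥ pX s),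
   s.h - σ • pX s⟩

def pstate (σ : ℕ → ℝ) (r : ℝ) : ℕ → PSt
  | 0 => ⟨0, 1, ![r, 0]⟩
  | k+1 => pstep (σ k) (pstate σ r k)

structure PInv (c : ℝ) (s : PSt) : Prop where
  Msym : s.Mᵀ = s.M
  Nsym : s.Nᵀ = s.N
  NA : s.N * (1 + s.M) = 1
  Mpsd : ∀ y : Fin 2 → ℝ, 0 ≤ y ⬝ᵥ s.M *ᵥ y
  hNh : s.h ⬝ᵥ s.N *ᵥ s.h = c

lemma PInv.AN {c s} (hs : PInv c s) : (1 + s.M) * s.N = 1 := by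
  have h2 := congrArg Matrix.transpose hs.NA
  rwa [Matrix.transpose_mul, Matrix.transpose_add, Matrix.transpose_one, hs.Msym, hs.Nsym] at h2

lemma PInv.Asym {c s} (hs : PInv c s) : (1 + s.M)ᵀ = 1 + s.M := by
  rw [Matrix.transpose_add, Matrix.transpose_one, hs.Msym]

lemma pX_facts {c : ℝ} (hc : 0 < c) {s : PSt} (hs : PInv c s) :
    (pX s) ⬝ᵥ s.N *ᵥ (pX s) = 1 ∧ (pX s) ⬝ᵥ s.N *ᵥ s.h = 0 ∧
      (1 + s.M) *ᵥ (s.N *ᵥ pX s) = pX s := by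
  have hNAv : ∀ v, s.N *ᵥ ((1 + s.M) *ᵥ v) = v := fun v => by
    rw [Matrix.mulVec_mulVec, hs.NA, Matrix.one_mulVec]
  have hANv : ∀ v, (1 + s.M) *ᵥ (s.N *ᵥ v) = v := fun v => by
    rw [Matrix.mulVec_mulVec, hs.AN, Matrix.one_mulVec]
  -- h ≠ 0
  have hh0 : s.h ≠ 0 := by
    intro h0
    have := hs.hNh
    rw [h0] at this
    simp [zero_dotProduct] at this
    exact absurd this.symm (ne_of_gt hc)
  have hww : 0 < pw s ⬝ᵥ pw s := by
    have h1 : pw s ⬝ᵥ pw s = s.h ⬝ᵥ s.h := by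
      simp [pw, dotProduct, Fin.sum_univ_two]; ring
    rw [h1]
    have hnn : 0 ≤ s.h ⬝ᵥ s.h := Finset.sum_nonneg (fun i _ => mul_self_nonneg _)
    rcases lt_or_eq_of_le hnn with h | h
    · exact h
    · exact absurd ((dotProduct_self_eq_zero).1 h.symm) hh0
  have hq : pw s ⬝ᵥ (1 + s.M) *ᵥ pw s = pw s ⬝ᵥ pw s + pw s ⬝ᵥ s.M *ᵥ pw s := by
    rw [Matrix.add_mulVec, Matrix.one_mulVec, dotProduct_add]
  have hqpos : 0 < pw s ⬝ᵥ (1 + s.M) *ᵥ pw s := by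
    rw [hq]; linarith [hs.Mpsd (pw s)]
  set q := pw s ⬝ᵥ (1 + s.M) *ᵥ pw s with hqdef
  have hsq : 0 < Real.sqrt q := Real.sqrt_pos.2 hqpos
  have hxd : pX s = (Real.sqrt q)⁻¹ • ((1 + s.M) *ᵥ pw s) := rfl
  have hNx : s.N *ᵥ pX s = (Real.sqrt q)⁻¹ • pw s := by
    rw [hxd, Matrix.mulVec_smul, hNAv]
  constructor
  · rw [hNx, hxd, smul_dotProduct, dotProduct_smul, smul_eq_mul, smul_eq_mul,
      dotProduct_comm, ← hqdef]
    rw [← Real.mul_self_sqrt hqpos.le]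
    field_simp
    rw [Real.sqrt_sq hsq.le]
  constructor
  · rw [hxd, smul_dotProduct, smul_eq_mul, myH, hs.Asym, hANv]
    have : pw s ⬝ᵥ s.h = 0 := by simp [pw, dotProduct, Fin.sum_univ_two]; ring
    rw [this, mul_zero]
  · rw [hNx, Matrix.mulVec_smul, ← hxd]

lemma pstep_inv {c : ℝ} (hc : 0 < c) {σ : ℝ} (hσ : σ = 1 ∨ σ = -1) {s : PSt}
    (hs : PInv c s) : PInv (c + 1/2) (pstep σ s) := by
  obtain ⟨hxNx, hxNh, hANx⟩ := pX_facts hc hs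
  set x := pX s with hxdef
  set z := s.N *ᵥ x with hzdef
  have hzx : z ⬝ᵥ x = 1 := by
    rw [hzdef, myH, hs.Nsym, ← hzdef, hzdef]; exact hxNx
  have hxz : x ⬝ᵥ z = 1 := by rw [dotProduct_comm]; exact hzx
  have hhNx : s.h ⬝ᵥ z = 0 := by
    rw [hzdef, dotProduct_comm, myH, hs.Nsym]; exact hxNh
  have hzh : z ⬝ᵥ s.h = 0 := by rw [dotProduct_comm]; exact hhNx
  have hAz : (1 + s.M) *ᵥ z = x := hANx
  have hM : (pstep σ s).M = s.M + vecMulVec x x := rfl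
  have hN : (pstep σ s).N = s.N - (2⁻¹:ℝ) • vecMulVec z z := rfl
  have hh : (pstep σ s).h = s.h - σ • x := rfl
  constructor
  · rw [hM, Matrix.transpose_add, hs.Msym, myE]
  · rw [hN, Matrix.transpose_sub, Matrix.transpose_smul, myE, hs.Nsym]
  · rw [hN, hM]
    have hre : (1 : Matrix (Fin 2) (Fin 2) ℝ) + (s.M + vecMulVec x x)
        = (1 + s.M) + vecMulVec x x := by abel
    rw [hre, sub_mul, mul_add s.N (1+s.M) (vecMulVec x x), hs.NA, smul_mul_assoc,
      mul_add (vecMulVec z z) (1+s.M) (vecMulVec x x), myA, myB, myD, hzx, hs.Asym,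
      hAz, one_smul, ← hzdef]
    module
  · intro y
    rw [hM, Matrix.add_mulVec, dotProduct_add, myC, dotProduct_smul, smul_eq_mul,
      dotProduct_comm y x]
    nlinarith [hs.Mpsd y, mul_self_nonneg (x ⬝ᵥ y)]
  · rw [hh, hN]
    simp only [Matrix.sub_mulVec, Matrix.mulVec_sub, Matrix.mulVec_smul,
      Matrix.smul_mulVec, myC, dotProduct_sub, sub_dotProduct,
      dotProduct_smul, smul_dotProduct, smul_eq_mul, ← hzdef]
    rw [hs.hNh, hxNh, hhNx, hxNx, hzx, hzh]
    rcases hσ with h | h <;> subst h <;> ring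

lemma pstate_inv (σ : ℕ → ℝ) (hσ : ∀ k, σ k = 1 ∨ σ k = -1) (r : ℝ) (hr : 0 < r) :
    ∀ k : ℕ, PInv (r^2 + (k:ℝ)/2) (pstate σ r k)
  | 0 => by
    have hM : (pstate σ r 0).M = 0 := rfl
    have hN : (pstate σ r 0).N = 1 := rfl
    have hh : (pstate σ r 0).h = ![r, 0] := rfl
    constructor
    · rw [hM]; exact Matrix.transpose_zero
    · rw [hN]; exact Matrix.transpose_one
    · rw [hN, hM]; simp
    · intro y; rw [hM]; simp [Matrix.zero_mulVec]
    · rw [hh, hN, Matrix.one_mulVec]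
      simp [dotProduct, Fin.sum_univ_two]
      ring
  | k+1 => by
    have h1 := pstep_inv (c := r^2 + k/2) (by positivity) (hσ k) (pstate_inv σ hσ r hr k)
    have h2 : (r:ℝ)^2 + ((k+1:ℕ):ℝ)/2 = (r^2 + k/2) + 1/2 := by push_cast; ring
    rw [h2]
    exact h1

lemma pstate_M (σ : ℕ → ℝ) (r : ℝ) :
    ∀ k, (pstate σ r k).M
      = ∑ j ∈ Finset.range k, vecMulVec (pX (pstate σ r j)) (pX (pstate σ r j))
  | 0 => by simp [pstate]
  | k+1 => by
    rw [Finset.sum_range_succ, ← pstate_M σ r k]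
    rfl

lemma pstate_h (σ : ℕ → ℝ) (r : ℝ) :
    ∀ k, (pstate σ r k).h = ![r, 0] - ∑ j ∈ Finset.range k, σ j • pX (pstate σ r j)
  | 0 => by simp [pstate]
  | k+1 => by
    rw [Finset.sum_range_succ]
    have : (pstate σ r (k+1)).h = (pstate σ r k).h - σ k • pX (pstate σ r k) := rfl
    rw [this, pstate_h σ r k]
    abel

lemma pstate_congr (σ σ' : ℕ → ℝ) (r : ℝ) :
    ∀ k, (∀ j < k, σ j = σ' j) → pstate σ r k = pstate σ' r k
  | 0, _ => rfl
  | k+1, h => by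
    have h1 : pstate σ r k = pstate σ' r k :=
      pstate_congr σ σ' r k (fun j hj => h j (Nat.lt_succ_of_lt hj))
    show pstep (σ k) (pstate σ r k) = pstep (σ' k) (pstate σ' r k)
    rw [h1, h k (Nat.lt_succ_self k)]

section Embed

lemma dotE {d : ℕ} {E : Matrix (Fin 2) (Fin d) ℝ} (hE : E * Eᵀ = 1) (a b : Fin 2 → ℝ) :
    (Eᵀ *ᵥ a) ⬝ᵥ (Eᵀ *ᵥ b) = a ⬝ᵥ b := by
  rw [myH, Matrix.transpose_transpose, Matrix.mulVec_mulVec, hE, Matrix.one_mulVec]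

lemma vmvE {d : ℕ} (E : Matrix (Fin 2) (Fin d) ℝ) (a b : Fin 2 → ℝ) :
    vecMulVec (Eᵀ *ᵥ a) (Eᵀ *ᵥ b) = Eᵀ * vecMulVec a b * E := by
  rw [← myA, ← myB]
  exact (Matrix.mul_assoc _ _ _).symm

lemma mvE {d : ℕ} {E : Matrix (Fin 2) (Fin d) ℝ} (hE : E * Eᵀ = 1)
    (A : Matrix (Fin 2) (Fin 2) ℝ) (b : Fin 2 → ℝ) :
    (Eᵀ * A * E) *ᵥ (Eᵀ *ᵥ b) = Eᵀ *ᵥ (A *ᵥ b) := by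
  rw [Matrix.mulVec_mulVec, Matrix.mulVec_mulVec]
  congr 1
  rw [Matrix.mul_assoc (Eᵀ * A) E Eᵀ, hE, Matrix.mul_one]

lemma mulE {d : ℕ} {E : Matrix (Fin 2) (Fin d) ℝ} (hE : E * Eᵀ = 1)
    (A B : Matrix (Fin 2) (Fin 2) ℝ) :
    (Eᵀ * A * E) * (Eᵀ * B * E) = Eᵀ * (A * B) * E := by
  rw [Matrix.mul_assoc (Eᵀ * A) E (Eᵀ * B * E), Matrix.mul_assoc Eᵀ B E,
    ← Matrix.mul_assoc E Eᵀ (B * E), hE, Matrix.one_mul,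
    ← Matrix.mul_assoc (Eᵀ * A) B E, Matrix.mul_assoc Eᵀ A B]

def bvec (d : ℕ) (t : ℕ) : Fin d → ℝ := fun i => if (i : ℕ) = t then 1 else 0

noncomputable def uhn (d : ℕ) (ε : ℕ → ℝ) (j : ℕ) : ℝ := -(ε j) / Real.sqrt d

noncomputable def vvn (ε : ℕ → ℝ) (j : ℕ) : ℝ :=
  if j = 0 then ε 1 / Real.sqrt 2 else if j = 1 then -(ε 0) / Real.sqrt 2 else 0

noncomputable def uhat (d : ℕ) (ε : ℕ → ℝ) : Fin d → ℝ := fun i => uhn d ε (i : ℕ)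

noncomputable def vvec (d : ℕ) (ε : ℕ → ℝ) : Fin d → ℝ := fun i => vvn ε (i : ℕ)

noncomputable def EE (d : ℕ) (ε : ℕ → ℝ) : Matrix (Fin 2) (Fin d) ℝ :=
  Matrix.of ![uhat d ε, vvec d ε]

noncomputable def pst (d : ℕ) (ε : ℕ → ℝ) (k : ℕ) : PSt :=
  pstate (fun j => ε (d + j)) (Real.sqrt (d / 2)) k

noncomputable def xx (d : ℕ) (ε : ℕ → ℝ) (t : ℕ) : Fin d → ℝ :=
  if t < d then bvec d t else (EE d ε)ᵀ *ᵥ pX (pst d ε (t - d))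

noncomputable def gg (d : ℕ) (ε : ℕ → ℝ) (t : ℕ) : ℝ :=
  if t < d then ε t / Real.sqrt 2 else ε t

lemma sum_fin_two_support {d : ℕ} (hd : 2 ≤ d) (f : ℕ → ℝ) (hf : ∀ j, 2 ≤ j → f j = 0) :
    ∑ i : Fin d, f (i : ℕ) = f 0 + f 1 := by
  rw [Fin.sum_univ_eq_sum_range]
  have hdm : d = 2 + (d - 2) := by omega
  rw [hdm, Finset.sum_range_add]
  have h2 : ∑ i ∈ Finset.range (d - 2), f (2 + i) = 0 :=
    Finset.sum_eq_zero (fun i _ => hf _ (by omega))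
  rw [h2, Finset.sum_range_succ, Finset.sum_range_one]
  ring

lemma EE_orth {d : ℕ} (hd : 2 ≤ d) {ε : ℕ → ℝ} (hε : ∀ j, ε j = 1 ∨ ε j = -1) :
    EE d ε * (EE d ε)ᵀ = 1 := by
  have hε2 : ∀ j, ε j * ε j = 1 := by
    intro j; rcases hε j with h | h <;> rw [h] <;> norm_num
  have hd0 : (0:ℝ) < d := by positivity
  have hsd : Real.sqrt d * Real.sqrt d = d := Real.mul_self_sqrt (by positivity)
  have hs2 : Real.sqrt 2 * Real.sqrt 2 = 2 := Real.mul_self_sqrt (by norm_num)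
  have hsd0 : Real.sqrt d ≠ 0 := by positivity
  have hs20 : Real.sqrt 2 ≠ 0 := by positivity
  have huu : ∑ i : Fin d, uhat d ε i * uhat d ε i = 1 := by
    have h1 : ∀ i : Fin d, uhat d ε i * uhat d ε i = 1 / d := by
      intro i
      unfold uhat uhn
      rw [div_mul_div_comm, hsd, neg_mul_neg, hε2]
    rw [Finset.sum_congr rfl (fun i _ => h1 i), Finset.sum_const, Finset.card_univ,
      Fintype.card_fin, nsmul_eq_mul]
    field_simp
  have huv : ∑ i : Fin d, uhat d ε i * vvec d ε i = 0 := by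
    have h1 : ∑ i : Fin d, uhn d ε (i:ℕ) * vvn ε (i:ℕ)
        = uhn d ε 0 * vvn ε 0 + uhn d ε 1 * vvn ε 1 :=
      sum_fin_two_support hd (fun j => uhn d ε j * vvn ε j)
        (fun j hj => by
          have h0 : j ≠ 0 := by omega
          have h1 : j ≠ 1 := by omega
          simp [vvn, h0, h1])
    have h2 : ∑ i : Fin d, uhat d ε i * vvec d ε i
        = uhn d ε 0 * vvn ε 0 + uhn d ε 1 * vvn ε 1 := h1
    rw [h2]
    norm_num [uhn, vvn]
    ring
  have hvv : ∑ i : Fin d, vvec d ε i * vvec d ε i = 1 := by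
    have h1 : ∑ i : Fin d, vvn ε (i:ℕ) * vvn ε (i:ℕ)
        = vvn ε 0 * vvn ε 0 + vvn ε 1 * vvn ε 1 :=
      sum_fin_two_support hd (fun j => vvn ε j * vvn ε j)
        (fun j hj => by
          have h0 : j ≠ 0 := by omega
          have h1 : j ≠ 1 := by omega
          simp [vvn, h0, h1])
    have h2 : ∑ i : Fin d, vvec d ε i * vvec d ε i
        = vvn ε 0 * vvn ε 0 + vvn ε 1 * vvn ε 1 := h1
    rw [h2]
    norm_num [vvn]
    rw [div_mul_div_comm, div_mul_div_comm, hs2, neg_mul_neg, hε2, hε2]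
    norm_num
  have hvu : ∑ i : Fin d, vvec d ε i * uhat d ε i = 0 := by
    rw [Finset.sum_congr rfl (fun i _ => mul_comm (vvec d ε i) (uhat d ε i))]
    exact huv
  ext k l
  rw [Matrix.mul_apply]
  have hentry : ∀ i : Fin d, EE d ε k i * (EE d ε)ᵀ i l = EE d ε k i * EE d ε l i :=
    fun i => rfl
  rw [Finset.sum_congr rfl (fun i _ => hentry i)]
  fin_cases k <;> fin_cases l <;>
    simp only [EE, Matrix.of_apply, Fin.mk_zero, Fin.mk_one, Fin.isValue,
      Matrix.cons_val_zero, Matrix.cons_val_one, Matrix.head_cons, Matrix.one_apply]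
  · rw [huu]; norm_num
  · rw [huv]; norm_num
  · rw [hvu]; norm_num
  · rw [hvv]; norm_num

end Embed

section Adapt

variable (d T : ℕ) (W : Fin T → (Fin T → Fin d → ℝ) → (Fin T → ℝ) → Fin d → ℝ)

lemma xx_congr (hd : 2 ≤ d) {ε ε' : ℕ → ℝ} {t : ℕ} (h : ∀ q < t, ε q = ε' q) :
    xx d ε t = xx d ε' t := by
  unfold xx
  by_cases ht : t < d
  · simp [ht]
  · push_neg at ht
    have hu : uhat d ε = uhat d ε' := by
      funext i
      unfold uhat uhn
      rw [h i (lt_of_lt_of_le i.2 ht)]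
    have hv : vvec d ε = vvec d ε' := by
      funext i
      unfold vvec vvn
      rw [h 0 (by omega), h 1 (by omega)]
    have hE : EE d ε = EE d ε' := by
      unfold EE
      rw [hu, hv]
    have hp : pst d ε (t - d) = pst d ε' (t - d) := by
      unfold pst
      exact pstate_congr _ _ _ _ (fun j hj => h (d + j) (by omega))
    rw [hE, hp]

noncomputable def FF : ℕ → (ℕ → ℝ) → ℝ := fun t ε =>
  if ht : t < T then
    sgn (xx d ε t ⬝ᵥ W ⟨t, ht⟩ (fun s => xx d ε s.1) (fun s => gg d ε s.1))
  else 1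

noncomputable def epf : ℕ → (ℕ → ℝ)
  | 0 => fun _ => 1
  | t+1 => Function.update (epf t) t (FF d T W t (epf t))

noncomputable def eps : ℕ → ℝ := fun t => epf d T W (t+1) t

lemma eps_FF : ∀ t, eps d T W t = FF d T W t (epf d T W t) := by
  intro t
  show Function.update (epf d T W t) t (FF d T W t (epf d T W t)) t = _
  rw [Function.update_self]

lemma eps_pm : ∀ t, eps d T W t = 1 ∨ eps d T W t = -1 := by
  intro t
  rw [eps_FF]
  unfold FF
  split
  · exact sgn_cases _
  · left; rfl

lemma epf_lt : ∀ t q, q < t → epf d T W t q = eps d T W q := by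
  intro t
  induction t with
  | zero => intro q hq; omega
  | succ s ih =>
    intro q hq
    rcases Nat.lt_succ_iff_lt_or_eq.1 hq with h | h
    · show Function.update (epf d T W s) s (FF d T W s (epf d T W s)) q = _
      rw [Function.update_of_ne (by omega)]
      exact ih q h
    · subst h; rfl

lemma eps_sgn (hd : 2 ≤ d)
    (hW : ∀ (t : Fin T) (x x' : Fin T → Fin d → ℝ) (g g' : Fin T → ℝ),
      (∀ q ≤ t, x q = x' q) → (∀ q < t, g q = g' q) → W t x g = W t x' g') :
    ∀ (t : ℕ) (ht : t < T),
      eps d T W t = sgn (xx d (eps d T W) t ⬝ᵥ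
        W ⟨t, ht⟩ (fun s => xx d (eps d T W) s.1) (fun s => gg d (eps d T W) s.1)) := by
  intro t ht
  rw [eps_FF]
  unfold FF
  rw [dif_pos ht]
  have hpre : ∀ q < t, epf d T W t q = eps d T W q := fun q hq => epf_lt d T W t q hq
  have hx : xx d (epf d T W t) t = xx d (eps d T W) t := xx_congr d hd hpre
  have hXall : ∀ q : Fin T, q ≤ (⟨t, ht⟩ : Fin T) →
      xx d (epf d T W t) q.1 = xx d (eps d T W) q.1 := by
    intro q hq
    exact xx_congr d hd (fun r hr => hpre r (lt_of_lt_of_le hr hq))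
  have hGall : ∀ q : Fin T, q < (⟨t, ht⟩ : Fin T) →
      gg d (epf d T W t) q.1 = gg d (eps d T W) q.1 := by
    intro q hq
    unfold gg
    rw [hpre q.1 hq]
  rw [hx, hW ⟨t, ht⟩ _ _ _ _ hXall hGall]

end Adapt

section Glue

lemma mulVec_sumv {d m : ℕ} (A : Matrix (Fin d) (Fin m) ℝ) (s : Finset ℕ) (v : ℕ → Fin m → ℝ) :
    A *ᵥ (∑ j ∈ s, v j) = ∑ j ∈ s, A *ᵥ v j :=
  map_sum (Matrix.mulVecLin A) v s

lemma sum_bvec' {d T : ℕ} (hTd : T ≤ d) :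
    ∑ t ∈ Finset.range T, vecMulVec (bvec d t) (bvec d t)
      = Matrix.diagonal (fun i : Fin d => if (i : ℕ) < T then (1:ℝ) else 0) := by
  ext i j
  rw [Matrix.sum_apply]
  by_cases hij : i = j
  · subst hij
    have hterm : ∀ t ∈ Finset.range T, vecMulVec (bvec d t) (bvec d t) i i
        = if (i:ℕ) = t then 1 else 0 := by
      intro t _
      unfold vecMulVec bvec
      by_cases h : (i:ℕ) = t <;> simp [h]
    rw [Finset.sum_congr rfl hterm, Finset.sum_ite_eq (Finset.range T) (i:ℕ) (fun _ => 1)]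
    simp [Matrix.diagonal_apply_eq, Finset.mem_range]
  · have hterm : ∀ t ∈ Finset.range T, vecMulVec (bvec d t) (bvec d t) i j = 0 := by
      intro t _
      unfold vecMulVec bvec
      by_cases h1 : (i:ℕ) = t <;> by_cases h2 : (j:ℕ) = t
      · exact absurd (Fin.val_injective (h1.trans h2.symm)) hij
      all_goals simp [h1, h2]
    rw [Finset.sum_congr rfl hterm, Finset.sum_const, smul_zero,
      Matrix.diagonal_apply_ne _ hij]

lemma sum_bvec {d : ℕ} :
    ∑ t ∈ Finset.range d, vecMulVec (bvec d t) (bvec d t) = 1 := by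
  rw [sum_bvec' (le_refl d)]
  have : (fun i : Fin d => if (i : ℕ) < d then (1:ℝ) else 0) = fun _ => 1 := by
    funext i; rw [if_pos i.2]
  rw [this, Matrix.diagonal_one]

lemma final_u {d T : ℕ} (hT : 1 ≤ T) {β : ℝ} (hβ : 0 ≤ β)
    (S Sd : Matrix (Fin d) (Fin d) ℝ) (hSdsym : Sdᵀ = Sd) (hSdS : Sd * S * Sd = Sd)
    (h : Fin d → ℝ) (hval : h ⬝ᵥ Sd.mulVec h = (T:ℝ) / 2)
    (P : ℝ) (hP : 0 ≤ P) (u : Fin d → ℝ)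
    (hu : u = (β * Real.sqrt (2 / T)) • Sd.mulVec h) :
    Real.sqrt (u ⬝ᵥ S.mulVec u) = β ∧
      P + h ⬝ᵥ u ≥ Real.sqrt (u ⬝ᵥ S.mulVec u) * Real.sqrt ((T:ℝ) / 2) := by
  have hT0 : (0:ℝ) < T := by exact_mod_cast hT
  have key : (Sd *ᵥ h) ⬝ᵥ S *ᵥ (Sd *ᵥ h) = (T:ℝ)/2 := by
    rw [Matrix.mulVec_mulVec, myH, Matrix.mulVec_mulVec, hSdsym, ← Matrix.mul_assoc, hSdS]
    exact hval
  have hmm : Real.sqrt (2/T) * Real.sqrt (2/T) = 2/T := Real.mul_self_sqrt (by positivity)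
  have huSu : u ⬝ᵥ S *ᵥ u = β^2 := by
    rw [hu, smul_dotProduct, Matrix.mulVec_smul, dotProduct_smul, smul_eq_mul, smul_eq_mul,
      key]
    have e : β * Real.sqrt (2/T) * (β * Real.sqrt (2/T) * ((T:ℝ)/2))
        = β^2 * ((Real.sqrt (2/T) * Real.sqrt (2/T)) * ((T:ℝ)/2)) := by ring
    rw [e, hmm]
    field_simp
  have hsqrtu : Real.sqrt (u ⬝ᵥ S *ᵥ u) = β := by
    rw [huSu]
    exact Real.sqrt_sq hβ
  refine ⟨hsqrtu, ?_⟩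
  have h1 : Real.sqrt ((2/T) * ((T:ℝ)/2)^2)
      = Real.sqrt (2/T) * Real.sqrt (((T:ℝ)/2)^2) := Real.sqrt_mul (by positivity) _
  have h2 : (2/T) * ((T:ℝ)/2)^2 = (T:ℝ)/2 := by field_simp
  have h3 : Real.sqrt (((T:ℝ)/2)^2) = (T:ℝ)/2 := Real.sqrt_sq (by positivity)
  rw [h2, h3] at h1
  have hhu : h ⬝ᵥ u = β * Real.sqrt ((T:ℝ)/2) := by
    rw [hu, dotProduct_smul, smul_eq_mul, hval, h1]
    ring
  rw [hsqrtu, hhu]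
  linarith

end Glue

lemma sum_dot {d : ℕ} {α : Type*} (s : Finset α) (v : α → Fin d → ℝ) (u : Fin d → ℝ) :
    (∑ a ∈ s, v a) ⬝ᵥ u = ∑ a ∈ s, v a ⬝ᵥ u := by
  unfold dotProduct
  rw [Finset.sum_comm]
  refine Finset.sum_congr rfl (fun i _ => ?_)
  rw [Finset.sum_apply, Finset.sum_mul]

lemma regret_split {d T : ℕ} (x : Fin T → Fin d → ℝ) (g : Fin T → ℝ)
    (w : Fin T → Fin d → ℝ) (u : Fin d → ℝ) :
    ∑ t, g t * (x t ⬝ᵥ (w t - u))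
      = (∑ t, g t * (x t ⬝ᵥ w t)) + (-∑ t, g t • x t) ⬝ᵥ u := by
  rw [neg_dotProduct, sum_dot, ← sub_eq_add_neg, ← Finset.sum_sub_distrib]
  refine Finset.sum_congr rfl (fun t _ => ?_)
  rw [smul_dotProduct, smul_eq_mul, dotProduct_sub]
  ring


end Planar

/-- `Sd` is the Moore–Penrose pseudoinverse of `S`. -/
def IsMoorePenroseInv {d : ℕ} (S Sd : Matrix (Fin d) (Fin d) ℝ) : Prop :=
  S * Sd * S = S ∧ Sd * S * Sd = Sd ∧ (S * Sd)ᵀ = S * Sd ∧ (Sd * S)ᵀ = Sd * S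

/-- Theorem 2 (lower bound for full scale invariance): for any online algorithm `W`
(whose weight vector at trial `t` depends only on the instances up to trial `t` and the
gradients before trial `t`) there is an adversarial sequence of instances and gradients,
with gradients in `{±1/√2}` for the first `d` trials and in `{±1}` afterwards, whose sign
matches the sign of the algorithm's prediction (so the algorithm's loss is nonnegative in
every trial), such that `h_Tᵀ S_T† h_T = T/2`; consequently the comparator
`u = β √(2/T) S_T† h_T` satisfies `‖u‖_{S_T} = β` and the (linearized) regret is at least
`‖u‖_{S_T} √(T/2)`. -/
theorem stmt_18 (d T : ℕ) (hd : 2 ≤ d) (hT : 1 ≤ T) (β : ℝ) (hβ : 0 ≤ β)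
    (W : Fin T → (Fin T → Fin d → ℝ) → (Fin T → ℝ) → Fin d → ℝ)
    (hW : ∀ (t : Fin T) (x x' : Fin T → Fin d → ℝ) (g g' : Fin T → ℝ),
      (∀ q ≤ t, x q = x' q) → (∀ q < t, g q = g' q) → W t x g = W t x' g') :
    ∃ (x : Fin T → Fin d → ℝ) (g : Fin T → ℝ),
      (∀ t : Fin T, (t.1 < d → g t = 1 / Real.sqrt 2 ∨ g t = -(1 / Real.sqrt 2)) ∧
        (d ≤ t.1 → g t = 1 ∨ g t = -1)) ∧
      (∀ t : Fin T, 0 ≤ g t * (x t ⬝ᵥ W t x g)) ∧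
      ∃ Sd : Matrix (Fin d) (Fin d) ℝ,
        IsMoorePenroseInv (∑ t, vecMulVec (x t) (x t)) Sd ∧
        (-∑ t, g t • x t) ⬝ᵥ Sd.mulVec (-∑ t, g t • x t) = T / 2 ∧
        ∀ u : Fin d → ℝ,
          u = (β * Real.sqrt (2 / T)) • Sd.mulVec (-∑ t, g t • x t) →
          Real.sqrt (u ⬝ᵥ (∑ t, vecMulVec (x t) (x t)).mulVec u) = β ∧
          ∑ t, g t * (x t ⬝ᵥ (W t x g - u)) ≥
            Real.sqrt (u ⬝ᵥ (∑ t, vecMulVec (x t) (x t)).mulVec u) * Real.sqrt (T / 2) := by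
  classical
  set ε := eps d T W with hεdef
  have hεpm : ∀ j, ε j = 1 ∨ ε j = -1 := eps_pm d T W
  set x : Fin T → Fin d → ℝ := fun t => xx d ε t.1 with hxdef
  set g : Fin T → ℝ := fun t => gg d ε t.1 with hgdef
  have hsgn : ∀ t : Fin T, ε t.1 = sgn (x t ⬝ᵥ W t x g) := by
    intro t
    exact eps_sgn d T W hd hW t.1 t.2
  have hgval : ∀ t : Fin T, g t = if t.1 < d then ε t.1 / Real.sqrt 2 else ε t.1 :=
    fun t => rfl
  have hsc : ∀ t : Fin T, 0 ≤ g t * (x t ⬝ᵥ W t x g) := by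
    intro t
    have hg2 : 0 ≤ sgn (x t ⬝ᵥ W t x g) * (x t ⬝ᵥ W t x g) := sgn_mul_nonneg _
    rw [hgval t]
    split
    · rw [hsgn t]
      have e : sgn (x t ⬝ᵥ W t x g) / Real.sqrt 2 * (x t ⬝ᵥ W t x g)
          = (sgn (x t ⬝ᵥ W t x g) * (x t ⬝ᵥ W t x g)) / Real.sqrt 2 := by ring
      rw [e]
      exact div_nonneg hg2 (Real.sqrt_nonneg 2)
    · rw [hsgn t]
      exact hg2
  refine ⟨x, g, ?_, hsc, ?_⟩
  · intro t
    constructor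
    · intro h
      rw [hgval t, if_pos h]
      rcases hεpm t.1 with he | he <;> rw [he]
      · left; rfl
      · right; rw [neg_div]
    · intro h
      rw [hgval t, if_neg (by omega)]
      exact hεpm t.1
  by_cases hdT : d ≤ T
  · -- main case: T ≥ d
    set σ : ℕ → ℝ := fun j => ε (d + j) with hσdef
    set r := Real.sqrt (d / 2) with hrdef
    have hr : 0 < r := Real.sqrt_pos.2 (by positivity)
    set n := T - d with hndef
    have hTn : T = d + n := by omega
    have hσpm : ∀ k, σ k = 1 ∨ σ k = -1 := fun k => hεpm _
    have hinv := pstate_inv σ hσpm r hr n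
    have hr2 : r ^ 2 = d / 2 := Real.sq_sqrt (by positivity)
    set E := EE d ε with hEdef
    have hE : E * Eᵀ = 1 := EE_orth hd hεpm
    set M := (pstate σ r n).M with hMdef
    set N := (pstate σ r n).N with hNdef
    set h2 := (pstate σ r n).h with hh2def
    have hxlt : ∀ t : ℕ, t < d → xx d ε t = bvec d t := fun t ht => if_pos ht
    have hxge : ∀ k : ℕ, xx d ε (d + k) = Eᵀ *ᵥ pX (pstate σ r k) := by
      intro k
      unfold xx
      rw [if_neg (by omega)]
      have hk : d + k - d = k := by omega
      rw [hk]
      rfl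
    have hS : (∑ t : Fin T, vecMulVec (x t) (x t)) = 1 + Eᵀ * M * E := by
      have h0 : (∑ t : Fin T, vecMulVec (x t) (x t))
          = ∑ t ∈ Finset.range T, vecMulVec (xx d ε t) (xx d ε t) :=
        Fin.sum_univ_eq_sum_range (fun j => vecMulVec (xx d ε j) (xx d ε j)) T
      rw [h0, hTn, Finset.sum_range_add]
      have hp1 : ∑ t ∈ Finset.range d, vecMulVec (xx d ε t) (xx d ε t) = 1 := by
        rw [Finset.sum_congr rfl
          (fun t ht => by rw [hxlt t (Finset.mem_range.1 ht)])]
        exact sum_bvec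
      have hp2 : ∑ k ∈ Finset.range n, vecMulVec (xx d ε (d + k)) (xx d ε (d + k))
          = Eᵀ * M * E := by
        have hterm : ∀ k ∈ Finset.range n,
            vecMulVec (xx d ε (d + k)) (xx d ε (d + k))
              = Eᵀ * vecMulVec (pX (pstate σ r k)) (pX (pstate σ r k)) * E := by
          intro k _
          rw [hxge k, vmvE]
        rw [Finset.sum_congr rfl hterm, ← Matrix.sum_mul, ← Matrix.mul_sum,
          hMdef, pstate_M σ r n]
      rw [hp1, hp2]
    have hrs : Real.sqrt d = r * Real.sqrt 2 := by
      rw [hrdef, ← Real.sqrt_mul (by positivity : (0:ℝ) ≤ (d:ℝ)/2) 2]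
      norm_num
    have hsd0 : (0:ℝ) < Real.sqrt 2 := by positivity
    have hh : (-∑ t : Fin T, g t • x t) = Eᵀ *ᵥ h2 := by
      have h0 : (∑ t : Fin T, g t • x t)
          = ∑ t ∈ Finset.range T, gg d ε t • xx d ε t :=
        Fin.sum_univ_eq_sum_range (fun j => gg d ε j • xx d ε j) T
      have hp1 : ∑ t ∈ Finset.range d, gg d ε t • xx d ε t = -(Eᵀ *ᵥ ![r, 0]) := by
        funext i
        rw [Finset.sum_apply]
        have hterm : ∀ t ∈ Finset.range d, (gg d ε t • xx d ε t) i
            = if (i:ℕ) = t then ε t / Real.sqrt 2 else 0 := by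
          intro t ht
          have htd := Finset.mem_range.1 ht
          rw [hxlt t htd]
          unfold gg bvec
          rw [if_pos htd]
          by_cases hit : (i:ℕ) = t <;> simp [hit]
        rw [Finset.sum_congr rfl hterm,
          Finset.sum_ite_eq (Finset.range d) (i:ℕ) (fun t => ε t / Real.sqrt 2),
          if_pos (Finset.mem_range.2 i.2)]
        have hEv : (Eᵀ *ᵥ ![r, 0]) i = -(ε (i:ℕ)) / Real.sqrt d * r := by
          show (∑ k : Fin 2, (EE d ε)ᵀ i k * ![r, 0] k) = _
          rw [Fin.sum_univ_two]
          show EE d ε 0 i * r + EE d ε 1 i * 0 = _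
          show uhn d ε (i:ℕ) * r + vvn ε (i:ℕ) * 0 = _
          unfold uhn
          ring
        rw [Pi.neg_apply, hEv, hrs]
        have hr0 : r ≠ 0 := ne_of_gt hr
        field_simp
      have hp2 : ∑ k ∈ Finset.range n, gg d ε (d + k) • xx d ε (d + k)
          = Eᵀ *ᵥ (∑ k ∈ Finset.range n, σ k • pX (pstate σ r k)) := by
        rw [mulVec_sumv]
        refine Finset.sum_congr rfl (fun k _ => ?_)
        rw [hxge k, Matrix.mulVec_smul]
        have hgk : gg d ε (d + k) = σ k := by
          unfold gg
          rw [if_neg (by omega)]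
        rw [hgk]
      rw [h0, hTn, Finset.sum_range_add, hp1, hp2, hh2def, pstate_h σ r n,
        Matrix.mulVec_sub]
      abel
    -- the pseudoinverse
    set Sd : Matrix (Fin d) (Fin d) ℝ := 1 + Eᵀ * (N - 1) * E with hSddef
    have hADD : ∀ X Y : Matrix (Fin 2) (Fin 2) ℝ,
        Eᵀ * X * E + Eᵀ * Y * E = Eᵀ * (X + Y) * E := by
      intro X Y
      rw [Matrix.mul_add, Matrix.add_mul]
    have hAN : (1 + M) * N = 1 := hinv.AN
    have hNA : N * (1 + M) = 1 := hinv.NA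
    have hSSd : (1 + Eᵀ * M * E) * Sd = 1 := by
      rw [hSddef, mul_add, mul_one, add_mul, Matrix.one_mul, mulE hE, add_assoc,
        hADD (N - 1) (M * (N - 1)), hADD M ((N - 1) + M * (N - 1))]
      have hzero : M + ((N - 1) + M * (N - 1)) = 0 := by
        have e : M + ((N - 1) + M * (N - 1)) = (1 + M) * N - 1 := by noncomm_ring
        rw [e, hAN, sub_self]
      rw [hzero, Matrix.mul_zero, Matrix.zero_mul, add_zero]
    have hSdS : Sd * (1 + Eᵀ * M * E) = 1 := by
      rw [hSddef, mul_add, mul_one, add_mul, Matrix.one_mul, mulE hE, add_assoc,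
        hADD M ((N - 1) * M), hADD (N - 1) (M + (N - 1) * M)]
      have hzero : (N - 1) + (M + (N - 1) * M) = 0 := by
        have e : (N - 1) + (M + (N - 1) * M) = N * (1 + M) - 1 := by noncomm_ring
        rw [e, hNA, sub_self]
      rw [hzero, Matrix.mul_zero, Matrix.zero_mul, add_zero]
    have hSdsym : Sdᵀ = Sd := by
      rw [hSddef, Matrix.transpose_add, Matrix.transpose_one]
      congr 1
      rw [Matrix.transpose_mul, Matrix.transpose_mul, Matrix.transpose_transpose,
        Matrix.transpose_sub, Matrix.transpose_one, hinv.Nsym, Matrix.mul_assoc]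
    have hSdv : Sd *ᵥ (Eᵀ *ᵥ h2) = Eᵀ *ᵥ (N *ᵥ h2) := by
      rw [hSddef, Matrix.add_mulVec, Matrix.one_mulVec, mvE hE, Matrix.sub_mulVec,
        Matrix.one_mulVec, Matrix.mulVec_sub]
      abel
    have hval : (Eᵀ *ᵥ h2) ⬝ᵥ Sd *ᵥ (Eᵀ *ᵥ h2) = (T:ℝ) / 2 := by
      rw [hSdv, dotE hE, hh2def, hNdef, hinv.hNh, hr2, hTn]
      push_cast
      ring
    refine ⟨Sd, ⟨?_, ?_, ?_, ?_⟩, ?_, ?_⟩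
    · rw [hS, hSSd, Matrix.one_mul]
    · rw [hS, hSdS, Matrix.one_mul]
    · rw [hS, hSSd, Matrix.transpose_one]
    · rw [hS, hSdS, Matrix.transpose_one]
    · rw [hh]
      exact hval
    · intro u hu
      rw [hh] at hu
      have hP0 : 0 ≤ ∑ t : Fin T, g t * (x t ⬝ᵥ W t x g) :=
        Finset.sum_nonneg (fun t _ => hsc t)
      have hSdSSd : Sd * (1 + Eᵀ * M * E) * Sd = Sd := by
        rw [hSdS, Matrix.one_mul]
      have hFU := final_u hT hβ (1 + Eᵀ * M * E) Sd hSdsym hSdSSd (Eᵀ *ᵥ h2) hval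
        (∑ t : Fin T, g t * (x t ⬝ᵥ W t x g)) hP0 u hu
      constructor
      · rw [hS]
        exact hFU.1
      · rw [hS, regret_split x g (fun t => W t x g) u, hh]
        exact hFU.2
  · -- case T < d
    push_neg at hdT
    have hxall : ∀ t : ℕ, t < T → xx d ε t = bvec d t := fun t ht => if_pos (by omega)
    set f : Fin d → ℝ := fun i => if (i:ℕ) < T then (1:ℝ) else 0 with hfdef
    have hff : (fun i => f i * f i) = f := by
      funext i
      by_cases h : (i:ℕ) < T <;> simp [hfdef, h]
    have hdd : Matrix.diagonal f * Matrix.diagonal f = Matrix.diagonal f := by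
      rw [Matrix.diagonal_mul_diagonal]
      exact congrArg Matrix.diagonal hff
    have hS : (∑ t : Fin T, vecMulVec (x t) (x t)) = Matrix.diagonal f := by
      have h0 : (∑ t : Fin T, vecMulVec (x t) (x t))
          = ∑ t ∈ Finset.range T, vecMulVec (xx d ε t) (xx d ε t) :=
        Fin.sum_univ_eq_sum_range (fun j => vecMulVec (xx d ε j) (xx d ε j)) T
      rw [h0, Finset.sum_congr rfl
        (fun t ht => by rw [hxall t (Finset.mem_range.1 ht)])]
      exact sum_bvec' (by omega)
    set hvec : Fin d → ℝ := fun i => if (i:ℕ) < T then -(ε (i:ℕ)) / Real.sqrt 2 else 0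
      with hvecdef
    have hh : (-∑ t : Fin T, g t • x t) = hvec := by
      have h0 : (∑ t : Fin T, g t • x t)
          = ∑ t ∈ Finset.range T, gg d ε t • xx d ε t :=
        Fin.sum_univ_eq_sum_range (fun j => gg d ε j • xx d ε j) T
      rw [h0]
      funext i
      rw [Pi.neg_apply, Finset.sum_apply]
      have hterm : ∀ t ∈ Finset.range T, (gg d ε t • xx d ε t) i
          = if (i:ℕ) = t then ε t / Real.sqrt 2 else 0 := by
        intro t ht
        have htT := Finset.mem_range.1 ht
        rw [hxall t htT]
        unfold gg bvec
        rw [if_pos (by omega)]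
        by_cases hit : (i:ℕ) = t <;> simp [hit]
      rw [Finset.sum_congr rfl hterm,
        Finset.sum_ite_eq (Finset.range T) (i:ℕ) (fun t => ε t / Real.sqrt 2)]
      rw [hvecdef]
      by_cases hiT : (i:ℕ) < T
      · rw [if_pos (Finset.mem_range.2 hiT)]
        show -(ε (i:ℕ) / Real.sqrt 2) = if (i:ℕ) < T then -(ε (i:ℕ)) / Real.sqrt 2 else 0
        rw [if_pos hiT, neg_div]
      · rw [if_neg (fun hmem => hiT (Finset.mem_range.1 hmem))]
        show -(0:ℝ) = if (i:ℕ) < T then -(ε (i:ℕ)) / Real.sqrt 2 else 0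
        rw [if_neg hiT, neg_zero]
    have hDh : Matrix.diagonal f *ᵥ hvec = hvec := by
      funext i
      rw [Matrix.mulVec_diagonal]
      by_cases hiT : (i:ℕ) < T
      · rw [hvecdef]
        show (if (i:ℕ) < T then (1:ℝ) else 0) * _ = _
        rw [if_pos hiT, one_mul]
      · show (if (i:ℕ) < T then (1:ℝ) else 0) * hvec i = hvec i
        have : hvec i = 0 := by rw [hvecdef]; exact if_neg hiT
        rw [this, mul_zero]
    have hval : hvec ⬝ᵥ Matrix.diagonal f *ᵥ hvec = (T:ℝ) / 2 := by
      rw [hDh]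
      have hε2 : ∀ j, ε j * ε j = 1 := by
        intro j; rcases hεpm j with h | h <;> rw [h] <;> norm_num
      have hs2 : Real.sqrt 2 * Real.sqrt 2 = 2 := Real.mul_self_sqrt (by norm_num)
      have h0 : hvec ⬝ᵥ hvec = ∑ j ∈ Finset.range d,
          (if j < T then -(ε j) / Real.sqrt 2 else 0) * (if j < T then -(ε j) / Real.sqrt 2 else 0) := by
        exact Fin.sum_univ_eq_sum_range
          (fun j => (if j < T then -(ε j) / Real.sqrt 2 else 0) * (if j < T then -(ε j) / Real.sqrt 2 else 0)) d
      rw [h0]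
      have hdm : d = T + (d - T) := by omega
      rw [hdm, Finset.sum_range_add]
      have hz : ∑ k ∈ Finset.range (d - T), ((if T + k < T then -(ε (T+k)) / Real.sqrt 2 else 0) * (if T + k < T then -(ε (T+k)) / Real.sqrt 2 else 0)) = 0 := by
        refine Finset.sum_eq_zero (fun k _ => ?_)
        rw [if_neg (by omega)]
        ring
      have hone : ∀ t ∈ Finset.range T, ((if t < T then -(ε t) / Real.sqrt 2 else 0) * (if t < T then -(ε t) / Real.sqrt 2 else 0)) = 1/2 := by
        intro t ht
        rw [if_pos (Finset.mem_range.1 ht), div_mul_div_comm, hs2, neg_mul_neg, hε2]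
      rw [hz, Finset.sum_congr rfl hone, Finset.sum_const, Finset.card_range, nsmul_eq_mul]
      ring
    have hSdsym : (Matrix.diagonal f)ᵀ = Matrix.diagonal f := Matrix.diagonal_transpose f
    refine ⟨Matrix.diagonal f, ⟨?_, ?_, ?_, ?_⟩, ?_, ?_⟩
    · rw [hS, hdd, hdd]
    · rw [hS, hdd, hdd]
    · rw [hS, hdd, hSdsym]
    · rw [hS, hdd, hSdsym]
    · rw [hh]
      exact hval
    · intro u hu
      rw [hh] at hu
      have hP0 : 0 ≤ ∑ t : Fin T, g t * (x t ⬝ᵥ W t x g) :=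
        Finset.sum_nonneg (fun t _ => hsc t)
      have hSdSSd : Matrix.diagonal f * Matrix.diagonal f * Matrix.diagonal f
          = Matrix.diagonal f := by rw [hdd, hdd]
      have hFU := final_u hT hβ (Matrix.diagonal f) (Matrix.diagonal f) hSdsym hSdSSd
        hvec hval (∑ t : Fin T, g t * (x t ⬝ᵥ W t x g)) hP0 u hu
      constructor
      · rw [hS]
        exact hFU.1
      · rw [hS, regret_split x g (fun t => W t x g) u, hh]
        exact hFU.2
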